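/- Let T₁ and T₂ be reduction operators relative to a general (not necessarily totally) ordered set (G,<). If ker(T₁) ⊆ ker(T₂), then every T₂-reduced generator is T₁-reduced; consequently, two generalized reduction operators with the same kernel are equal, and the relation ker-reverse-inclusion is a partial order on the set of generalized reduction operators. -/

import Mathlib

def IsGenRedOp {K G : Type*} [Field K] [PartialOrder G]
    (T : Module.End K (G →₀ K)) : Prop :=
  T ∘ₗ T = T ∧ ∀ g : G, T (Finsupp.single g 1) = Finsupp.single g 1 ∨
    ∀ g' ∈ (T (Finsupp.single g 1)).support, g' < g

section Aux
variable {K G : Type*} [Field K] [PartialOrder G]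

omit [PartialOrder G] in
lemma genRed_sum_single (y : G →₀ K) :
    ∑ g ∈ y.support, y g • Finsupp.single g (1 : K) = y := by
  have := Finsupp.sum_single y
  rw [Finsupp.sum] at this
  simpa [Finsupp.smul_single] using this

lemma genRed_map_eq (T : Module.End K (G →₀ K)) (y : G →₀ K) :
    T y = ∑ g ∈ y.support, y g • T (Finsupp.single g 1) := by
  conv_lhs => rw [← genRed_sum_single y]
  rw [map_sum]
  refine Finset.sum_congr rfl fun g _ => ?_
  rw [map_smul]

/-- Support of `T y` is below support of `y`. -/
lemma genRed_supp_le (T : Module.End K (G →₀ K)) (hT : IsGenRedOp T) (y : G →₀ K) :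
    ∀ g' ∈ (T y).support, ∃ g ∈ y.support, g' ≤ g := by
  classical
  intro g' hg'
  rw [genRed_map_eq T y] at hg'
  have := Finsupp.support_finset_sum (s := y.support)
    (f := fun g => y g • T (Finsupp.single g 1)) hg'
  obtain ⟨g, hg, hmem⟩ := Finset.mem_biUnion.mp this
  refine ⟨g, hg, ?_⟩
  have hsub : (y g • T (Finsupp.single g 1)).support ⊆ (T (Finsupp.single g 1)).support :=
    Finsupp.support_smul
  have hmem' := hsub hmem
  rcases hT.2 g with h | h
  · rw [h] at hmem'
    simp only [Finsupp.support_single_ne_zero _ (one_ne_zero), Finset.mem_singleton] at hmem'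
    exact hmem' ▸ le_refl g
  · exact (h g' hmem').le

/-- Anything fixed by `T` is supported on `T`-reduced generators. -/
lemma genRed_fixed_supp (T : Module.End K (G →₀ K)) (hT : IsGenRedOp T) (y : G →₀ K)
    (hy : T y = y) : ∀ g ∈ y.support, T (Finsupp.single g 1) = Finsupp.single g 1 := by
  classical
  by_contra hcon
  push_neg at hcon
  obtain ⟨g₀, hg₀, hg₀n⟩ := hcon
  set N : Finset G := y.support.filter (fun g => T (Finsupp.single g 1) ≠ Finsupp.single g 1)
    with hN
  have hNne : N.Nonempty := ⟨g₀, Finset.mem_filter.mpr ⟨hg₀, hg₀n⟩⟩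
  obtain ⟨g, hgN, hgmax⟩ : ∃ g ∈ N, ∀ g' ∈ N, ¬ g < g' := by
    obtain ⟨g, hg⟩ := Finset.exists_maximal hNne
    exact ⟨g, hg.1, fun g' hg' hlt => hlt.not_ge (hg.2 hg' hlt.le)⟩
  have hgsupp : g ∈ y.support := (Finset.mem_filter.mp hgN).1
  have hgn : T (Finsupp.single g 1) ≠ Finsupp.single g 1 := (Finset.mem_filter.mp hgN).2
  have hyg : y g = ∑ g' ∈ y.support, y g' * (T (Finsupp.single g' 1)) g := by
    conv_lhs => rw [← hy, genRed_map_eq T y]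
    rw [Finset.sum_apply']
    simp [Finsupp.smul_apply, smul_eq_mul]
  have hzero : ∀ g' ∈ y.support, y g' * (T (Finsupp.single g' 1)) g = 0 := by
    intro g' hg'
    rcases hT.2 g' with h | h
    · rw [h]
      rcases eq_or_ne g' g with rfl | hne
      · exact absurd h hgn
      · rw [Finsupp.single_eq_of_ne hne.symm]
        ring
    · by_cases hc : (T (Finsupp.single g' 1)) g = 0
      · rw [hc]; ring
      · have hglt : g < g' := h g (Finsupp.mem_support_iff.mpr hc)
        have hg'n : T (Finsupp.single g' 1) ≠ Finsupp.single g' 1 := by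
          intro he
          rw [he] at hc
          have : g = g' := by
            by_contra hne
            exact hc (Finsupp.single_eq_of_ne (fun hgg => hne hgg))
          exact absurd (this ▸ hglt) (lt_irrefl _)
        exact absurd hglt (hgmax g' (Finset.mem_filter.mpr ⟨hg', hg'n⟩))
  rw [Finset.sum_congr rfl hzero, Finset.sum_const_zero] at hyg
  exact (Finsupp.mem_support_iff.mp hgsupp) hyg

/-- If all generators in the support of `y` are `T`-reduced, `T` fixes `y`. -/
lemma genRed_fix_of_supp (T : Module.End K (G →₀ K)) (y : G →₀ K)
    (h : ∀ g ∈ y.support, T (Finsupp.single g 1) = Finsupp.single g 1) : T y = y := by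
  rw [genRed_map_eq T y]
  conv_rhs => rw [← genRed_sum_single y]
  exact Finset.sum_congr rfl (fun g hg => by rw [h g hg])

lemma genRed_red_mono (T₁ T₂ : Module.End K (G →₀ K))
    (h₁ : IsGenRedOp T₁) (h₂ : IsGenRedOp T₂)
    (hker : LinearMap.ker T₁ ≤ LinearMap.ker T₂) :
    {g : G | T₂ (Finsupp.single g 1) = Finsupp.single g 1} ⊆
      {g : G | T₁ (Finsupp.single g 1) = Finsupp.single g 1} := by
  intro g hg
  simp only [Set.mem_setOf_eq] at hg ⊢
  rcases h₁.2 g with h | h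
  · exact h
  · exfalso
    set z := T₁ (Finsupp.single g 1) with hz
    have hkmem : Finsupp.single g (1 : K) - z ∈ LinearMap.ker T₁ := by
      rw [LinearMap.mem_ker, map_sub, hz]
      rw [show T₁ (T₁ (Finsupp.single g 1)) = T₁ (Finsupp.single g 1) from
        LinearMap.congr_fun h₁.1 _, sub_self]
    have h2 : T₂ (Finsupp.single g (1:K) - z) = 0 := hker hkmem
    have hT2z : T₂ z = Finsupp.single g 1 := by
      have := map_sub T₂ (Finsupp.single g (1:K)) z
      rw [h2, hg] at this
      exact (sub_eq_zero.mp this.symm).symm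
    have hgsupp : g ∈ (T₂ z).support := by
      rw [hT2z]
      simp [Finsupp.support_single_ne_zero _ (one_ne_zero : (1:K) ≠ 0)]
    obtain ⟨g', hg', hle⟩ := genRed_supp_le T₂ h₂ z g hgsupp
    exact absurd (lt_of_le_of_lt hle (h g' hg')) (lt_irrefl g)

end Aux

/-- For generalised reduction operators: if `ker T₁ ⊆ ker T₂` then every
`T₂`-reduced generator is `T₁`-reduced; consequently two generalised reduction
operators with the same kernel are equal, and reverse inclusion of kernels is
antisymmetric, hence a partial order. -/
theorem genRedOp_ker_mono {K G : Type*} [Field K] [PartialOrder G]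
    (T₁ T₂ : Module.End K (G →₀ K))
    (h₁ : IsGenRedOp T₁) (h₂ : IsGenRedOp T₂)
    (hker : LinearMap.ker T₁ ≤ LinearMap.ker T₂) :
    ({g : G | T₂ (Finsupp.single g 1) = Finsupp.single g 1} ⊆
        {g : G | T₁ (Finsupp.single g 1) = Finsupp.single g 1}) ∧
      (∀ S₁ S₂ : Module.End K (G →₀ K), IsGenRedOp S₁ → IsGenRedOp S₂ →
        LinearMap.ker S₁ = LinearMap.ker S₂ → S₁ = S₂) := by
  refine ⟨genRed_red_mono T₁ T₂ h₁ h₂ hker, ?_⟩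
  intro S₁ S₂ hS₁ hS₂ hk
  refine LinearMap.ext fun x => ?_
  have hx : x - S₂ x ∈ LinearMap.ker S₂ := by
    rw [LinearMap.mem_ker, map_sub]
    rw [show S₂ (S₂ x) = S₂ x from LinearMap.congr_fun hS₂.1 x, sub_self]
  have hx₁ : S₁ (x - S₂ x) = 0 := by
    rw [← LinearMap.mem_ker, hk]; exact hx
  have hS₁S₂ : S₁ (S₂ x) = S₂ x := by
    apply genRed_fix_of_supp
    intro g hg
    have hred₂ : S₂ (Finsupp.single g 1) = Finsupp.single g 1 := by
      exact genRed_fixed_supp S₂ hS₂ (S₂ x) (LinearMap.congr_fun hS₂.1 x) g hg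
    exact genRed_red_mono S₁ S₂ hS₁ hS₂ hk.le hred₂
  have : S₁ x - S₁ (S₂ x) = 0 := by rw [← map_sub]; exact hx₁
  have hfin : S₁ x = S₂ x := by
    rw [hS₁S₂] at this
    exact sub_eq_zero.mp this
  exact hfin
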